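/- arXiv:1411.6532 — 4 statements merged into one kernel-verified Lean document; each statement's English description precedes it below -/
import Mathlib

section
/- Let G be a connected strongly regular graph with parameters (n, k, λ, μ) that is not a complete graph (so n ≠ k + 1). Then its nontrivial Laplacian eigenvalues are exactly ℓ_1(G) = ( 2k − λ + μ + sqrt( (λ − μ)² + 4(k − μ) ) ) / 2 and ℓ_{n−1}(G) = ( 2k − λ + μ − sqrt( (λ − μ)² + 4(k − μ) ) ) / 2; in particular these bounds coincide with the upper bound ( 2Δ − λ + μ + sqrt( (2Δ − λ + μ)² − 4μn ) )/2 on ℓ_1(G) and the lower bound ( 2δ − λ + μ − sqrt( (2δ − λ + μ)² − 4μn ) )/2 on ℓ_{n−1}(G) with δ = Δ = k, so strongly regular graphs attain these bounds with equality. -/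
open Finset Matrix

/-- **Corollary (strongly regular graphs attain the bounds).** For a connected
strongly regular graph `G` with parameters `(n, k, λ, μ)` that is not complete
(`n ≠ k + 1`), the nontrivial Laplacian eigenvalues are exactly
`(2k − λ + μ ± √((λ−μ)² + 4(k−μ)))/2`, and these coincide with the bounds
`(2k − λ + μ ± √((2k − λ + μ)² − 4μn))/2` (with `δ = Δ = k`). -/
theorem srg_attains_bounds (n k lam mu : ℕ) (G : SimpleGraph (Fin n))
    [DecidableRel G.Adj]
    (hsrg : G.IsSRGWith n k lam mu)
    (hconn : G.Connected)
    (hnc : n ≠ k + 1) :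
    (∀ l : ℝ,
      (∃ X : Fin n → ℝ, X ≠ 0 ∧ (∑ i, X i) = 0 ∧ (G.lapMatrix ℝ).mulVec X = l • X) ↔
      (l = (2 * (k : ℝ) - (lam : ℝ) + (mu : ℝ)
          + Real.sqrt (((lam : ℝ) - (mu : ℝ)) ^ 2 + 4 * ((k : ℝ) - (mu : ℝ)))) / 2 ∨
       l = (2 * (k : ℝ) - (lam : ℝ) + (mu : ℝ)
          - Real.sqrt (((lam : ℝ) - (mu : ℝ)) ^ 2 + 4 * ((k : ℝ) - (mu : ℝ)))) / 2)) ∧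
    (2 * (k : ℝ) - (lam : ℝ) + (mu : ℝ)
        + Real.sqrt (((lam : ℝ) - (mu : ℝ)) ^ 2 + 4 * ((k : ℝ) - (mu : ℝ)))) / 2
      = (2 * (k : ℝ) - (lam : ℝ) + (mu : ℝ)
        + Real.sqrt ((2 * (k : ℝ) - (lam : ℝ) + (mu : ℝ)) ^ 2 - 4 * (mu : ℝ) * (n : ℝ))) / 2 ∧
    (2 * (k : ℝ) - (lam : ℝ) + (mu : ℝ)
        - Real.sqrt (((lam : ℝ) - (mu : ℝ)) ^ 2 + 4 * ((k : ℝ) - (mu : ℝ)))) / 2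
      = (2 * (k : ℝ) - (lam : ℝ) + (mu : ℝ)
        - Real.sqrt ((2 * (k : ℝ) - (lam : ℝ) + (mu : ℝ)) ^ 2 - 4 * (mu : ℝ) * (n : ℝ))) / 2 := by
  -- basic numeric facts
  have hn0 : 0 < n := Fin.pos_iff_nonempty.mpr hconn.nonempty
  have v0 : Fin n := ⟨0, hn0⟩
  have hkn : k < n := by
    have h := G.degree_lt_card_verts v0
    rwa [hsrg.regular v0, Fintype.card_fin] at h
  have hn2 : k + 2 ≤ n := by omega
  -- an edge exists
  obtain ⟨a, b, hab⟩ : ∃ a b : Fin n, G.Adj a b := by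
    have key : ∀ {x y : Fin n}, G.Walk x y → x ≠ y → ∃ a b : Fin n, G.Adj a b := by
      intro x y p hxy
      cases p with
      | nil => exact absurd rfl hxy
      | cons h _ => exact ⟨_, _, h⟩
    have h01 : (⟨0, by omega⟩ : Fin n) ≠ ⟨1, by omega⟩ := by simp [Fin.ext_iff]
    obtain ⟨p⟩ := hconn.preconnected ⟨0, by omega⟩ ⟨1, by omega⟩
    exact key p h01
  have hk1 : 1 ≤ k := by
    have := (G.degree_pos_iff_exists_adj a).mpr ⟨b, hab⟩
    rw [hsrg.regular a] at this
    omega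
  -- lam + 1 ≤ k
  have hlam : lam + 1 ≤ k := by
    have hc := hsrg.of_adj a b hab
    have hsub : (G.commonNeighbors a b).toFinset ⊆ (G.neighborFinset a).erase b := by
      intro x hx
      rw [Set.mem_toFinset] at hx
      rw [Finset.mem_erase, SimpleGraph.mem_neighborFinset]
      exact ⟨fun h => (h ▸ hx.2 : G.Adj b b).ne rfl, hx.1⟩
    have := Finset.card_le_card hsub
    rw [Finset.card_erase_of_mem (by rwa [SimpleGraph.mem_neighborFinset])] at this
    rw [SimpleGraph.card_neighborFinset_eq_degree, hsrg.regular a,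
      Set.toFinset_card, hc] at this
    omega
  -- mu ≤ k
  have hmu : mu ≤ k := by
    obtain ⟨w, hwne, hwna⟩ : ∃ w, w ≠ v0 ∧ ¬ G.Adj v0 w := by
      by_contra hcon
      push_neg at hcon
      have : Finset.univ.erase v0 ⊆ G.neighborFinset v0 := by
        intro x hx
        rw [Finset.mem_erase] at hx
        rw [SimpleGraph.mem_neighborFinset]
        exact hcon x hx.1
      have := Finset.card_le_card this
      rw [Finset.card_erase_of_mem (Finset.mem_univ v0), Finset.card_univ,
        Fintype.card_fin, SimpleGraph.card_neighborFinset_eq_degree, hsrg.regular v0] at this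
      omega
    have hc := hsrg.of_not_adj (Ne.symm hwne) hwna
    have hsub : (G.commonNeighbors v0 w).toFinset ⊆ G.neighborFinset v0 := by
      intro x hx
      rw [Set.mem_toFinset] at hx
      rw [SimpleGraph.mem_neighborFinset]
      exact hx.1
    have := Finset.card_le_card hsub
    rw [SimpleGraph.card_neighborFinset_eq_degree, hsrg.regular v0,
      Set.toFinset_card, hc] at this
    omega
  -- the parameter identity, over ℝ
  have hpar := SimpleGraph.IsSRGWith.param_eq G hsrg hn0
  have hQ : (k : ℝ)^2 + (k:ℝ)*(mu:ℝ) - (k:ℝ)*(lam:ℝ) - (k:ℝ) + (mu:ℝ)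
      = (mu:ℝ) * (n:ℝ) := by
    have h1 : ((k * (k - lam - 1) : ℕ) : ℝ) = (k:ℝ) * ((k:ℝ) - (lam:ℝ) - 1) := by
      push_cast [Nat.cast_sub (by omega : lam ≤ k), Nat.cast_sub (by omega : 1 ≤ k - lam)]
      ring
    have h2 : (((n - k - 1) * mu : ℕ) : ℝ) = ((n:ℝ) - (k:ℝ) - 1) * (mu:ℝ) := by
      push_cast [Nat.cast_sub (by omega : k ≤ n), Nat.cast_sub (by omega : 1 ≤ n - k)]
      ring
    have h3 : (k:ℝ) * ((k:ℝ) - (lam:ℝ) - 1) = ((n:ℝ) - (k:ℝ) - 1) * (mu:ℝ) := by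
      rw [← h1, ← h2]; exact_mod_cast congrArg (Nat.cast : ℕ → ℝ) hpar
    linear_combination h3
  have hD0 : (0:ℝ) ≤ ((lam : ℝ) - (mu : ℝ)) ^ 2 + 4 * ((k : ℝ) - (mu : ℝ)) := by
    have : (mu:ℝ) ≤ (k:ℝ) := by exact_mod_cast hmu
    nlinarith [sq_nonneg ((lam:ℝ) - (mu:ℝ))]
  have hd2 : Real.sqrt (((lam : ℝ) - (mu : ℝ)) ^ 2 + 4 * ((k : ℝ) - (mu : ℝ))) ^ 2
      = ((lam : ℝ) - (mu : ℝ)) ^ 2 + 4 * ((k : ℝ) - (mu : ℝ)) := Real.sq_sqrt hD0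
  have hDeq : (2 * (k : ℝ) - (lam : ℝ) + (mu : ℝ)) ^ 2 - 4 * (mu : ℝ) * (n : ℝ)
      = ((lam : ℝ) - (mu : ℝ)) ^ 2 + 4 * ((k : ℝ) - (mu : ℝ)) := by
    linear_combination (4 : ℝ) * hQ
  -- pointwise Laplacian formula
  have hLap : ∀ (X : Fin n → ℝ) (i : Fin n),
      (G.lapMatrix ℝ *ᵥ X) i = (k:ℝ) * X i - (G.adjMatrix ℝ *ᵥ X) i := by
    intro X i
    rw [SimpleGraph.lapMatrix_mulVec_apply, hsrg.regular i,
      ← SimpleGraph.adjMatrix_mulVec_apply]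
  -- complement adjacency action on zero-sum vectors
  have hCompl : ∀ (X : Fin n → ℝ), (∑ i, X i) = 0 → ∀ i,
      (Gᶜ.adjMatrix ℝ *ᵥ X) i = -X i - (G.adjMatrix ℝ *ᵥ X) i := by
    intro X hX i
    rw [SimpleGraph.adjMatrix_mulVec_apply, SimpleGraph.neighborFinset_compl]
    have hsub : {i} ⊆ (G.neighborFinset i)ᶜ := by
      simp [Finset.singleton_subset_iff]
    rw [Finset.sum_sdiff_eq_sub hsub, Finset.sum_singleton]
    have hcompl : ∑ u ∈ (G.neighborFinset i)ᶜ, X u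
        = (∑ u, X u) - ∑ u ∈ G.neighborFinset i, X u := by
      rw [eq_sub_iff_add_eq, Finset.sum_compl_add_sum]
    rw [hcompl, hX, SimpleGraph.adjMatrix_mulVec_apply]
    ring
  -- quadratic relation for A on zero-sum vectors
  have hA2 : ∀ (X : Fin n → ℝ), (∑ i, X i) = 0 → ∀ i,
      (G.adjMatrix ℝ *ᵥ (G.adjMatrix ℝ *ᵥ X)) i
        = (k:ℝ) * X i + (lam:ℝ) * (G.adjMatrix ℝ *ᵥ X) i
          + (mu:ℝ) * (-X i - (G.adjMatrix ℝ *ᵥ X) i) := by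
    intro X hX i
    have hM := hsrg.matrix_eq (α := ℝ)
    have h1 : (G.adjMatrix ℝ *ᵥ (G.adjMatrix ℝ *ᵥ X)) i
        = (((k • (1 : Matrix (Fin n) (Fin n) ℝ) + lam • G.adjMatrix ℝ
            + mu • Gᶜ.adjMatrix ℝ)) *ᵥ X) i := by
      rw [Matrix.mulVec_mulVec, ← pow_two, hM]
    rw [h1]
    rw [← Nat.cast_smul_eq_nsmul ℝ k, ← Nat.cast_smul_eq_nsmul ℝ lam,
      ← Nat.cast_smul_eq_nsmul ℝ mu, Matrix.add_mulVec, Matrix.add_mulVec,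
      Matrix.smul_mulVec, Matrix.smul_mulVec, Matrix.smul_mulVec,
      Matrix.one_mulVec]
    simp only [Pi.add_apply, Pi.smul_apply, smul_eq_mul]
    rw [hCompl X hX i]
  -- quadratic relation for L on zero-sum vectors
  have hL2 : ∀ (X : Fin n → ℝ), (∑ i, X i) = 0 → ∀ i,
      (G.lapMatrix ℝ *ᵥ (G.lapMatrix ℝ *ᵥ X)) i
        = (2 * (k : ℝ) - (lam : ℝ) + (mu : ℝ)) * (G.lapMatrix ℝ *ᵥ X) i
          - ((mu:ℝ) * (n:ℝ)) * X i := by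
    intro X hX i
    have hLX : G.lapMatrix ℝ *ᵥ X = (k:ℝ) • X - G.adjMatrix ℝ *ᵥ X := by
      funext j
      simp only [Pi.sub_apply, Pi.smul_apply, smul_eq_mul]
      exact hLap X j
    have h1 : (G.lapMatrix ℝ *ᵥ (G.lapMatrix ℝ *ᵥ X)) i
        = (k:ℝ) * (G.lapMatrix ℝ *ᵥ X) i
          - (G.adjMatrix ℝ *ᵥ (G.lapMatrix ℝ *ᵥ X)) i := hLap _ i
    have h2 : G.adjMatrix ℝ *ᵥ (G.lapMatrix ℝ *ᵥ X)
        = (k:ℝ) • (G.adjMatrix ℝ *ᵥ X) - G.adjMatrix ℝ *ᵥ (G.adjMatrix ℝ *ᵥ X) := by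
      rw [hLX, Matrix.mulVec_sub, Matrix.mulVec_smul]
    rw [h1, h2]
    simp only [Pi.sub_apply, Pi.smul_apply, smul_eq_mul]
    have h3 := hA2 X hX i
    have h4 := hLap X i
    linear_combination h3 + ((k:ℝ) - (2 * (k : ℝ) - (lam : ℝ) + (mu : ℝ))) * h4 - X i * hQ
  -- column sums of L are zero
  have hSumL : ∀ X : Fin n → ℝ, ∑ i, (G.lapMatrix ℝ *ᵥ X) i = 0 := by
    intro X
    have hrow : ∀ i, ∑ j, G.lapMatrix ℝ i j = 0 := by
      intro i
      have h := congrFun (G.lapMatrix_mulVec_const_eq_zero (R := ℝ)) i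
      simpa [Matrix.mulVec, dotProduct] using h
    have hcol : ∀ j, ∑ i, G.lapMatrix ℝ i j = 0 := by
      intro j
      have hs : ∀ i, G.lapMatrix ℝ i j = G.lapMatrix ℝ j i := fun i =>
        (G.isSymm_lapMatrix (R := ℝ)).apply j i
      rw [Finset.sum_congr rfl (fun i _ => hs i)]
      exact hrow j
    simp only [Matrix.mulVec, dotProduct]
    rw [Finset.sum_comm]
    have : ∀ j, ∑ i, G.lapMatrix ℝ i j * X j = 0 := by
      intro j
      rw [← Finset.sum_mul, hcol j, zero_mul]
    exact Finset.sum_congr rfl (fun j _ => this j) ▸ Finset.sum_const_zero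
  -- for every c there is a zero-sum vector that is not a c-eigenvector
  have hNC : ∀ c : ℝ, ∃ w : Fin n → ℝ, (∑ i, w i) = 0 ∧ G.lapMatrix ℝ *ᵥ w ≠ c • w := by
    intro c
    by_contra hcon
    push_neg at hcon
    have hval : ∀ i j : Fin n, i ≠ j →
        (k:ℝ) + (if G.Adj i j then (1:ℝ) else 0) = c := by
      intro i j hij
      set w : Fin n → ℝ := Pi.single i 1 - Pi.single j 1 with hw
      have hsum : ∑ t, w t = 0 := by
        simp [hw, Finset.sum_sub_distrib]
      have he := congrFun (hcon w hsum) i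
      have hLw : (G.lapMatrix ℝ *ᵥ w) i = G.lapMatrix ℝ i i - G.lapMatrix ℝ i j := by
        rw [hw, Matrix.mulVec_sub, Matrix.mulVec_single, Matrix.mulVec_single]
        simp
      have hLii : G.lapMatrix ℝ i i = (k:ℝ) := by
        simp [SimpleGraph.lapMatrix, SimpleGraph.degMatrix, hsrg.regular i]
      have hLij : G.lapMatrix ℝ i j = -(if G.Adj i j then (1:ℝ) else 0) := by
        simp [SimpleGraph.lapMatrix, SimpleGraph.degMatrix, Matrix.diagonal, hij]
      have hwi : w i = 1 := by
        simp [hw, Pi.single_apply, hij]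
      rw [hLw, hLii, hLij] at he
      rw [Pi.smul_apply, hwi, smul_eq_mul, mul_one] at he
      linarith
    have hcab := hval a b hab.ne
    rw [if_pos hab] at hcab
    have hcomplete : ∀ i j : Fin n, i ≠ j → G.Adj i j := by
      intro i j hij
      have h := hval i j hij
      by_contra hna
      rw [if_neg hna] at h
      rw [← hcab] at h
      norm_num at h
    have : Finset.univ.erase v0 ⊆ G.neighborFinset v0 := by
      intro x hx
      rw [Finset.mem_erase] at hx
      rw [SimpleGraph.mem_neighborFinset]
      exact hcomplete v0 x (Ne.symm hx.1)
    have hcard := Finset.card_le_card this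
    rw [Finset.card_erase_of_mem (Finset.mem_univ v0), Finset.card_univ,
      Fintype.card_fin, SimpleGraph.card_neighborFinset_eq_degree, hsrg.regular v0] at hcard
    omega
  -- construction of eigenvectors from the two roots
  have construct : ∀ l m : ℝ, l + m = 2 * (k : ℝ) - (lam : ℝ) + (mu : ℝ) →
      l * m = (mu:ℝ) * (n:ℝ) →
      ∃ X : Fin n → ℝ, X ≠ 0 ∧ (∑ i, X i) = 0 ∧ (G.lapMatrix ℝ).mulVec X = l • X := by
    intro l m hs hp
    obtain ⟨w, hwsum, hwne⟩ := hNC m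
    refine ⟨G.lapMatrix ℝ *ᵥ w - m • w, sub_ne_zero.mpr hwne, ?_, ?_⟩
    · simp only [Pi.sub_apply, Pi.smul_apply, smul_eq_mul]
      rw [Finset.sum_sub_distrib, hSumL w, ← Finset.mul_sum, hwsum]
      ring
    · funext i
      rw [Matrix.mulVec_sub, Matrix.mulVec_smul]
      simp only [Pi.sub_apply, Pi.smul_apply, smul_eq_mul]
      have h1 := hL2 w hwsum i
      rw [h1]
      linear_combination (-(G.lapMatrix ℝ *ᵥ w) i) * hs + w i * hp
  refine ⟨?_, by rw [hDeq], by rw [hDeq]⟩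
  intro l
  constructor
  · rintro ⟨X, hX0, hXsum, hXeig⟩
    obtain ⟨i0, hi0⟩ : ∃ i, X i ≠ 0 := by
      by_contra h
      push_neg at h
      exact hX0 (funext fun i => h i)
    have hAX : ∀ i, (G.adjMatrix ℝ *ᵥ X) i = ((k:ℝ) - l) * X i := by
      intro i
      have h1 := hLap X i
      have h2 := congrFun hXeig i
      rw [Pi.smul_apply, smul_eq_mul] at h2
      rw [h2] at h1
      linarith
    have h4 : (G.adjMatrix ℝ *ᵥ (G.adjMatrix ℝ *ᵥ X)) i0
        = ((k:ℝ) - l) * (((k:ℝ) - l) * X i0) := by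
      have hfun : G.adjMatrix ℝ *ᵥ X = ((k:ℝ) - l) • X := by
        funext j
        rw [Pi.smul_apply, smul_eq_mul]
        exact hAX j
      rw [hfun, Matrix.mulVec_smul, Pi.smul_apply, smul_eq_mul, hfun, Pi.smul_apply,
        smul_eq_mul]
    have h3 := hA2 X hXsum i0
    rw [h4, hAX i0] at h3
    have h5 : (((k:ℝ) - l)^2
        - ((k:ℝ) + (lam:ℝ)*((k:ℝ)-l) + (mu:ℝ)*(-1 - ((k:ℝ)-l)))) * X i0 = 0 := by
      linear_combination h3
    rcases mul_eq_zero.mp h5 with h6 | h6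
    · have heq : ((k:ℝ) - l)^2
          = (k:ℝ) + (lam:ℝ)*((k:ℝ)-l) + (mu:ℝ)*(-1 - ((k:ℝ)-l)) := by
        linarith [h6]
      have hfac : (l - (2 * (k : ℝ) - (lam : ℝ) + (mu : ℝ)
            + Real.sqrt (((lam : ℝ) - (mu : ℝ)) ^ 2 + 4 * ((k : ℝ) - (mu : ℝ)))) / 2)
          * (l - (2 * (k : ℝ) - (lam : ℝ) + (mu : ℝ)
            - Real.sqrt (((lam : ℝ) - (mu : ℝ)) ^ 2 + 4 * ((k : ℝ) - (mu : ℝ)))) / 2) = 0 := by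
        linear_combination heq - (1/4 : ℝ) * hd2
      rcases mul_eq_zero.mp hfac with h7 | h7
      · exact Or.inl (by linarith [sub_eq_zero.mp h7])
      · exact Or.inr (by linarith [sub_eq_zero.mp h7])
    · exact absurd h6 hi0
  · intro h
    have hprod : ((2 * (k : ℝ) - (lam : ℝ) + (mu : ℝ)
          + Real.sqrt (((lam : ℝ) - (mu : ℝ)) ^ 2 + 4 * ((k : ℝ) - (mu : ℝ)))) / 2)
        * ((2 * (k : ℝ) - (lam : ℝ) + (mu : ℝ)
          - Real.sqrt (((lam : ℝ) - (mu : ℝ)) ^ 2 + 4 * ((k : ℝ) - (mu : ℝ)))) / 2)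
        = (mu:ℝ) * (n:ℝ) := by
      linear_combination (-(1/4) : ℝ) * hd2 + hQ
    rcases h with h | h
    · rw [h]
      exact construct _ _ (by ring) hprod
    · rw [h]
      exact construct
        ((2 * (k : ℝ) - (lam : ℝ) + (mu : ℝ)
          - Real.sqrt (((lam : ℝ) - (mu : ℝ)) ^ 2 + 4 * ((k : ℝ) - (mu : ℝ)))) / 2)
        ((2 * (k : ℝ) - (lam : ℝ) + (mu : ℝ)
          + Real.sqrt (((lam : ℝ) - (mu : ℝ)) ^ 2 + 4 * ((k : ℝ) - (mu : ℝ)))) / 2)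
        (by ring) (by linear_combination hprod)
end

section
/- Let n ≥ 6 and let G be a simple connected (n−3)-regular graph on n vertices, so that its complement G^c is a disjoint union of cycles. Then G is strongly regular if and only if every connected component of G^c has exactly 3 vertices; and in that case ℓ_1(G) = n and ℓ_{n−1}(G) = n − 3. -/
open Finset

open SimpleGraph Matrix

variable {n : ℕ} {H : SimpleGraph (Fin n)} [DecidableRel H.Adj]

set_option linter.unusedSectionVars false

lemma walk_mem_closed {S : Set (Fin n)} (hS : ∀ x ∈ S, ∀ y, H.Adj x y → y ∈ S) :
    ∀ {v x : Fin n}, H.Walk v x → v ∈ S → x ∈ S := by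
  intro v x w
  induction w with
  | nil => exact fun h => h
  | cons h p ih => exact fun hv => ih (hS _ hv _ h)

lemma nbr_pair (hd : ∀ v, H.degree v = 2) (v : Fin n) :
    ∃ a b, a ≠ b ∧ H.neighborFinset v = {a, b} :=
  Finset.card_eq_two.mp (hd v)

/-- every edge lies in a triangle -/
def TriCond (H : SimpleGraph (Fin n)) : Prop :=
  ∀ ⦃u v : Fin n⦄, H.Adj u v → ∃ w, H.Adj u w ∧ H.Adj v w

lemma pair_eq_of_mem {a b c d : Fin n} (hab : a ≠ b) (ha : a ∈ ({c, d} : Finset (Fin n)))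
    (hb : b ∈ ({c, d} : Finset (Fin n))) : ({c, d} : Finset (Fin n)) = {a, b} := by
  apply Finset.eq_of_superset_of_card_ge
  · intro x hx; simp only [mem_insert, mem_singleton] at hx
    rcases hx with h | h <;> subst h <;> assumption
  · rw [Finset.card_pair hab]; exact Finset.card_insert_le _ _ |>.trans (by simp)

lemma tri_nbhd (hd : ∀ v, H.degree v = 2) (ht : TriCond H) {v a b : Fin n}
    (hN : H.neighborFinset v = {a, b}) :
    H.Adj v a ∧ H.Adj v b ∧ H.Adj a b ∧
      H.neighborFinset a = {v, b} ∧ H.neighborFinset b = {v, a} := by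
  have hva : H.Adj v a := by rw [← mem_neighborFinset, hN]; simp
  have hvb : H.Adj v b := by rw [← mem_neighborFinset, hN]; simp
  have hab : a ≠ b := by
    intro h
    have := hd v
    rw [SimpleGraph.degree, hN, h] at this; simp at this
  obtain ⟨w, hvw, haw⟩ := ht hva
  have hw : w ∈ ({a, b} : Finset (Fin n)) := by rw [← hN, mem_neighborFinset]; exact hvw
  simp only [mem_insert, mem_singleton] at hw
  have hwb : w = b := by
    rcases hw with h | h
    · exact absurd h haw.ne.symm
    · exact h
  rw [hwb] at haw
  have hvb' : v ≠ b := hvb.ne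
  have hNa : H.neighborFinset a = {v, b} := by
    have hsub : ({v, b} : Finset (Fin n)) ⊆ H.neighborFinset a := by
      intro x hx; simp only [mem_insert, mem_singleton] at hx
      rcases hx with h | h <;> subst h <;> rw [mem_neighborFinset]
      · exact hva.symm
      · exact haw
    apply (Finset.eq_of_subset_of_card_le hsub ?_).symm
    rw [Finset.card_pair hvb']; exact le_of_eq (hd a)
  have hva' : v ≠ a := hva.ne
  have hNb : H.neighborFinset b = {v, a} := by
    have hsub : ({v, a} : Finset (Fin n)) ⊆ H.neighborFinset b := by
      intro x hx; simp only [mem_insert, mem_singleton] at hx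
      rcases hx with h | h <;> subst h <;> rw [mem_neighborFinset]
      · exact hvb.symm
      · exact haw.symm
    apply (Finset.eq_of_subset_of_card_le hsub ?_).symm
    rw [Finset.card_pair hva']; exact le_of_eq (hd b)
  exact ⟨hva, hvb, haw, hNa, hNb⟩

/-- closed neighborhood -/
def CN (H : SimpleGraph (Fin n)) [DecidableRel H.Adj] (v : Fin n) : Finset (Fin n) :=
  insert v (H.neighborFinset v)

lemma mem_CN_self (v : Fin n) : v ∈ CN H v := Finset.mem_insert_self _ _

lemma CN_eq_of_mem (hd : ∀ v, H.degree v = 2) (ht : TriCond H) {v x : Fin n}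
    (hx : x ∈ CN H v) : CN H x = CN H v := by
  obtain ⟨a, b, hab, hN⟩ := nbr_pair hd v
  obtain ⟨hva, hvb, hab', hNa, hNb⟩ := tri_nbhd hd ht hN
  rw [CN, hN] at hx
  simp only [mem_insert, mem_singleton] at hx
  rcases hx with h | h | h <;> subst h
  · rfl
  · rw [CN, CN, hNa, hN]
    ext y; simp only [mem_insert, mem_singleton]; tauto
  · rw [CN, CN, hNb, hN]
    ext y; simp only [mem_insert, mem_singleton]; tauto

lemma card_CN (hd : ∀ v, H.degree v = 2) (v : Fin n) : (CN H v).card = 3 := by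
  rw [CN, Finset.card_insert_of_notMem (by simp)]; have := hd v; rw [SimpleGraph.degree] at this; omega

lemma supp_eq_CN (hd : ∀ v, H.degree v = 2) (ht : TriCond H) (v : Fin n) :
    (H.connectedComponentMk v).supp = (CN H v : Set (Fin n)) := by
  ext x
  simp only [ConnectedComponent.mem_supp_iff, ConnectedComponent.eq]
  constructor
  · intro h
    obtain ⟨w⟩ := h.symm
    exact walk_mem_closed (S := (CN H v : Set (Fin n)))
      (fun y hy z hz => by
        have : z ∈ CN H y := by rw [CN]; simp [mem_neighborFinset, hz]
        rw [← CN_eq_of_mem hd ht (by exact_mod_cast hy)]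
        exact_mod_cast this) w (by exact_mod_cast mem_CN_self v)
  · intro h
    simp only [Finset.coe_insert, Set.mem_insert_iff, mem_coe, mem_neighborFinset, CN] at h
    rcases h with h | h
    · subst h; rfl
    · exact (h.symm.reachable).symm.symm

lemma ncard_supp_of_tri (hd : ∀ v, H.degree v = 2) (ht : TriCond H) (v : Fin n) :
    (H.connectedComponentMk v).supp.ncard = 3 := by
  rw [supp_eq_CN hd ht, Set.ncard_coe_finset, card_CN hd]

lemma tri_of_ncard_supp (hd : ∀ v, H.degree v = 2)
    (hs : ∀ v : Fin n, (H.connectedComponentMk v).supp.ncard = 3) : TriCond H := by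
  intro u v huv
  obtain ⟨c, d, hcd, hN⟩ := nbr_pair hd u
  have hc : H.Adj u c := by rw [← mem_neighborFinset, hN]; simp
  have hd' : H.Adj u d := by rw [← mem_neighborFinset, hN]; simp
  -- supp of u equals {u, c, d}
  have hsub : ({u, c, d} : Set (Fin n)) ⊆ (H.connectedComponentMk u).supp := by
    intro x hx
    simp only [Set.mem_insert_iff, Set.mem_singleton_iff] at hx
    simp only [ConnectedComponent.mem_supp_iff, ConnectedComponent.eq]
    rcases hx with h | h | h <;> subst h
    · rfl
    · exact hc.symm.reachable
    · exact hd'.symm.reachable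
  have hncard : ({u, c, d} : Set (Fin n)).ncard = 3 := by
    rw [Set.ncard_insert_of_notMem (by simp [hc.ne, hd'.ne]),
      Set.ncard_insert_of_notMem (by simp [hcd]), Set.ncard_singleton]
  have hsupp : (H.connectedComponentMk u).supp = ({u, c, d} : Set (Fin n)) := by
    symm
    apply Set.eq_of_subset_of_ncard_le hsub (by rw [hs u, hncard]) (Set.toFinite _)
  -- now neighbors of c
  obtain ⟨e, f, hef, hNc⟩ := nbr_pair hd c
  have he : H.Adj c e := by rw [← mem_neighborFinset, hNc]; simp
  have hf : H.Adj c f := by rw [← mem_neighborFinset, hNc]; simp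
  have hmemc : ∀ x, H.Adj c x → x ∈ ({u, c, d} : Set (Fin n)) := by
    intro x hx
    rw [← hsupp]
    simp only [ConnectedComponent.mem_supp_iff, ConnectedComponent.eq]
    exact (hx.symm.reachable).trans hc.symm.reachable
  have hmem_e := hmemc e he
  have hmem_f := hmemc f hf
  simp only [Set.mem_insert_iff, Set.mem_singleton_iff] at hmem_e hmem_f
  have hcd' : H.Adj c d := by
    have hepair : e ∈ ({u, d} : Finset (Fin n)) := by
      rcases hmem_e with h | h | h
      · simp [h]
      · exact absurd h he.ne'
      · simp [h]
    have hfpair : f ∈ ({u, d} : Finset (Fin n)) := by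
      rcases hmem_f with h | h | h
      · simp [h]
      · exact absurd h hf.ne'
      · simp [h]
    have : ({u, d} : Finset (Fin n)) = {e, f} := pair_eq_of_mem hef hepair hfpair
    have hdmem : d ∈ H.neighborFinset c := by
      rw [hNc, ← this]; simp
    rw [mem_neighborFinset] at hdmem; exact hdmem
  -- v is c or d
  have hv : v ∈ ({c, d} : Finset (Fin n)) := by rw [← hN, mem_neighborFinset]; exact huv
  simp only [mem_insert, mem_singleton] at hv
  rcases hv with h | h <;> subst h
  · exact ⟨d, hd', hcd'⟩
  · exact ⟨c, hc, hcd'.symm⟩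

section Gside
variable {G : SimpleGraph (Fin n)} [DecidableRel G.Adj]

lemma compl_deg_two (hn : 6 ≤ n) (hreg : G.IsRegularOfDegree (n - 3)) (v : Fin n) :
    (Gᶜ).degree v = 2 := by
  rw [SimpleGraph.degree_compl, hreg v, Fintype.card_fin]
  omega

lemma nbhdG_eq (v : Fin n) :
    G.neighborFinset v = (insert v ((Gᶜ).neighborFinset v))ᶜ := by
  ext x
  simp only [mem_neighborFinset, Finset.mem_compl, mem_insert, compl_adj]
  constructor
  · intro h
    push_neg
    exact ⟨h.ne', fun _ => h⟩
  · intro h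
    push_neg at h
    exact h.2 fun he => h.1 he.symm

lemma card_common_eq (u v : Fin n) :
    Fintype.card (G.commonNeighbors u v) =
      n - (insert u ((Gᶜ).neighborFinset u) ∪ insert v ((Gᶜ).neighborFinset v)).card := by
  classical
  have h1 : (G.commonNeighbors u v).toFinset = G.neighborFinset u ∩ G.neighborFinset v := by
    ext x
    simp [Set.mem_toFinset, mem_commonNeighbors, mem_neighborFinset]
  rw [← Set.toFinset_card, h1, nbhdG_eq u, nbhdG_eq v, ← Finset.compl_union,
    Finset.card_compl, Fintype.card_fin]

end Gside

lemma nbr_other (hd : ∀ v, H.degree v = 2) {u v : Fin n} (huv : H.Adj u v) :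
    ∃ a, a ≠ v ∧ H.neighborFinset u = {v, a} := by
  obtain ⟨c, d, hcd, hN⟩ := nbr_pair hd u
  have hv : v ∈ ({c, d} : Finset (Fin n)) := by rw [← hN, mem_neighborFinset]; exact huv
  simp only [mem_insert, mem_singleton] at hv
  rcases hv with h | h <;> subst h
  · exact ⟨d, hcd.symm, hN⟩
  · exact ⟨c, hcd, by rw [hN, Finset.pair_comm]⟩

section Gside2
variable {G : SimpleGraph (Fin n)} [DecidableRel G.Adj]

/-- the union of closed neighborhoods in the complement -/
def UU (G : SimpleGraph (Fin n)) [DecidableRel G.Adj] (u v : Fin n) : Finset (Fin n) :=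
  insert u ((Gᶜ).neighborFinset u) ∪ insert v ((Gᶜ).neighborFinset v)

lemma adjG_of_ne_of_not_adjC {u v : Fin n} (hne : u ≠ v) (h : ¬ (Gᶜ).Adj u v) :
    G.Adj u v := by
  by_contra hA
  exact h ((compl_adj G u v).mpr ⟨hne, hA⟩)

lemma factA {k lam mu : ℕ} (hsrg : G.IsSRGWith n k lam mu) {u v : Fin n}
    (huv : (Gᶜ).Adj u v) : mu + (UU G u v).card = n := by
  have hne : u ≠ v := huv.ne
  have hnadj : ¬ G.Adj u v := ((compl_adj G u v).mp huv).2
  have h1 := hsrg.of_not_adj hne hnadj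
  have h2 := card_common_eq (G := G) u v
  have h3 : (UU G u v).card ≤ n := by
    have := Finset.card_le_univ (UU G u v)
    simpa using this
  rw [UU] at *
  omega

lemma factB {k lam mu : ℕ} (hsrg : G.IsSRGWith n k lam mu) {u v : Fin n}
    (huv : G.Adj u v) : lam + (UU G u v).card = n := by
  have h1 := hsrg.of_adj u v huv
  have h2 := card_common_eq (G := G) u v
  have h3 : (UU G u v).card ≤ n := by
    have := Finset.card_le_univ (UU G u v)
    simpa using this
  rw [UU] at *
  omega

lemma claim1 (hd : ∀ v, (Gᶜ).degree v = 2) {u v w : Fin n} (huv : (Gᶜ).Adj u v)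
    (hw : (Gᶜ).Adj u w ∧ (Gᶜ).Adj v w) : (UU G u v).card = 3 := by
  obtain ⟨huw, hvw⟩ := hw
  have hNu : (Gᶜ).neighborFinset u = {v, w} := by
    obtain ⟨c, d, hcd, hN⟩ := nbr_pair hd u
    rw [hN]
    refine pair_eq_of_mem hvw.ne ?_ ?_ <;> rw [← hN, mem_neighborFinset]
    · exact huv
    · exact huw
  have hNv : (Gᶜ).neighborFinset v = {u, w} := by
    obtain ⟨c, d, hcd, hN⟩ := nbr_pair hd v
    rw [hN]
    refine pair_eq_of_mem huw.ne ?_ ?_ <;> rw [← hN, mem_neighborFinset]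
    · exact huv.symm
    · exact hvw
  have hU : UU G u v = {u, v, w} := by
    rw [UU, hNu, hNv]
    ext x; simp only [mem_union, mem_insert, mem_singleton]; tauto
  rw [hU, Finset.card_insert_of_notMem (by simp [huv.ne, huw.ne]),
    Finset.card_insert_of_notMem (by simp [hvw.ne]), Finset.card_singleton]

lemma claim2 (hd : ∀ v, (Gᶜ).degree v = 2) {u v : Fin n} (huv : (Gᶜ).Adj u v)
    (hno : ¬ ∃ w, (Gᶜ).Adj u w ∧ (Gᶜ).Adj v w) : (UU G u v).card = 4 := by
  obtain ⟨a, hav, hNu⟩ := nbr_other hd huv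
  obtain ⟨b, hbu, hNv⟩ := nbr_other hd huv.symm
  have hua : (Gᶜ).Adj u a := by rw [← mem_neighborFinset, hNu]; simp
  have hvb : (Gᶜ).Adj v b := by rw [← mem_neighborFinset, hNv]; simp
  have hab : a ≠ b := by
    intro h; subst h
    exact hno ⟨a, hua, hvb⟩
  have hU : UU G u v = {u, v, a, b} := by
    rw [UU, hNu, hNv]
    ext x; simp only [mem_union, mem_insert, mem_singleton]; tauto
  have hub : u ≠ b := fun h => hbu h.symm
  rw [hU, Finset.card_insert_of_notMem (by simp [huv.ne, hua.ne, hub]),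
    Finset.card_insert_of_notMem (by simp [hav.symm, hvb.ne]),
    Finset.card_insert_of_notMem (by simp [hab]), Finset.card_singleton]

lemma tri_of_srg (hn : 6 ≤ n) (hreg : G.IsRegularOfDegree (n - 3))
    {k lam mu : ℕ} (hsrg : G.IsSRGWith n k lam mu) : TriCond Gᶜ := by
  have hd : ∀ v, (Gᶜ).degree v = 2 := compl_deg_two hn hreg
  by_cases hall : ∀ u v : Fin n, (Gᶜ).Adj u v → ∃ w, (Gᶜ).Adj u w ∧ (Gᶜ).Adj v w
  · exact fun u v h => hall u v h
  push_neg at hall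
  obtain ⟨u, v, huv, hno⟩ := hall
  exfalso
  have hc2 : (UU G u v).card = 4 := claim2 hd huv (by push_neg; exact hno)
  have hA1 := factA hsrg huv
  -- no edge has a triangle
  have hnotri : ∀ a b : Fin n, (Gᶜ).Adj a b → ¬ ∃ w, (Gᶜ).Adj a w ∧ (Gᶜ).Adj b w := by
    intro a b hab hex
    have h3 := claim1 (G := G) hd hab hex.choose_spec
    have h4 := factA hsrg hab
    omega
  -- pick x0 and its two neighbors p q
  have hx0 : ∃ x : Fin n, True := ⟨⟨0, by omega⟩, trivial⟩
  obtain ⟨x0, -⟩ := hx0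
  obtain ⟨p, q, hpq, hNx0⟩ := nbr_pair hd x0
  have hx0p : (Gᶜ).Adj x0 p := by rw [← mem_neighborFinset, hNx0]; simp
  have hx0q : (Gᶜ).Adj x0 q := by rw [← mem_neighborFinset, hNx0]; simp
  have hpqn : ¬ (Gᶜ).Adj p q := fun h => hnotri p q h ⟨x0, hx0p.symm, hx0q.symm⟩
  have hGpq : G.Adj p q := adjG_of_ne_of_not_adjC hpq hpqn
  have hBpq := factB hsrg hGpq
  -- card (UU G p q) ≤ 5
  have hx0Np : x0 ∈ (Gᶜ).neighborFinset p := by rw [mem_neighborFinset]; exact hx0p.symm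
  have hx0Nq : x0 ∈ (Gᶜ).neighborFinset q := by rw [mem_neighborFinset]; exact hx0q.symm
  have hUpq : (UU G p q).card ≤ 5 := by
    have hsub : UU G p q ⊆ insert p (insert q ((Gᶜ).neighborFinset p ∪ (Gᶜ).neighborFinset q)) := by
      intro x hx
      simp only [UU, mem_union, mem_insert] at hx ⊢
      tauto
    have h1 := Finset.card_le_card hsub
    have h2 := Finset.card_insert_le q (((Gᶜ).neighborFinset p ∪ (Gᶜ).neighborFinset q))
    have h3 := Finset.card_insert_le p (insert q (((Gᶜ).neighborFinset p ∪ (Gᶜ).neighborFinset q)))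
    have h4 := Finset.card_union_add_card_inter ((Gᶜ).neighborFinset p) ((Gᶜ).neighborFinset q)
    have h5 : 1 ≤ (((Gᶜ).neighborFinset p) ∩ ((Gᶜ).neighborFinset q)).card :=
      Finset.card_pos.mpr ⟨x0, Finset.mem_inter.mpr ⟨hx0Np, hx0Nq⟩⟩
    have h6 := hd p
    have h7 := hd q
    rw [SimpleGraph.degree] at h6 h7
    omega
  -- find y outside B
  set B : Finset (Fin n) := insert x0 (insert p (insert q
      (((Gᶜ).neighborFinset p \ {x0}) ∪ ((Gᶜ).neighborFinset q \ {x0})))) with hB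
  have hcardB : B.card ≤ 5 := by
    have h1 : ((Gᶜ).neighborFinset p \ {x0}).card ≤ 1 := by
      rw [Finset.card_sdiff_of_subset (by simpa using hx0Np)]
      have := hd p; rw [SimpleGraph.degree] at this; simp [this]
    have h2 : ((Gᶜ).neighborFinset q \ {x0}).card ≤ 1 := by
      rw [Finset.card_sdiff_of_subset (by simpa using hx0Nq)]
      have := hd q; rw [SimpleGraph.degree] at this; simp [this]
    have c3 := Finset.card_union_le ((Gᶜ).neighborFinset p \ {x0}) ((Gᶜ).neighborFinset q \ {x0})
    have c4 := Finset.card_insert_le q (((Gᶜ).neighborFinset p \ {x0}) ∪ ((Gᶜ).neighborFinset q \ {x0}))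
    have c5 := Finset.card_insert_le p (insert q (((Gᶜ).neighborFinset p \ {x0}) ∪ ((Gᶜ).neighborFinset q \ {x0})))
    have c6 := Finset.card_insert_le x0 (insert p (insert q (((Gᶜ).neighborFinset p \ {x0}) ∪ ((Gᶜ).neighborFinset q \ {x0}))))
    rw [hB]
    omega
  have hy : ∃ y, y ∉ B := by
    by_contra hc
    push_neg at hc
    have : Finset.univ ⊆ B := fun z _ => hc z
    have := Finset.card_le_card this
    simp only [Finset.card_univ, Fintype.card_fin] at this
    omega
  obtain ⟨y, hyB⟩ := hy
  have hyx0 : y ≠ x0 := fun h => hyB (by simp [hB, h])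
  have hyNx0 : ¬ (Gᶜ).Adj x0 y := by
    intro h
    have : y ∈ ({p, q} : Finset (Fin n)) := by rw [← hNx0, mem_neighborFinset]; exact h
    simp only [mem_insert, mem_singleton] at this
    apply hyB; rw [hB]
    rcases this with h' | h' <;> rw [h']
    · exact Finset.mem_insert_of_mem (Finset.mem_insert_self _ _)
    · exact Finset.mem_insert_of_mem (Finset.mem_insert_of_mem (Finset.mem_insert_self _ _))
  have hGx0y : G.Adj x0 y := adjG_of_ne_of_not_adjC (fun h => hyx0 h.symm) hyNx0
  have hBx0y := factB hsrg hGx0y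
  -- card (UU G x0 y) = 6
  have hUx0y : (UU G x0 y).card = 6 := by
    have hdisj : Disjoint (insert x0 ((Gᶜ).neighborFinset x0)) (insert y ((Gᶜ).neighborFinset y)) := by
      rw [Finset.disjoint_left]
      intro z hz1 hz2
      simp only [mem_insert, mem_neighborFinset] at hz1 hz2
      rcases hz1 with h1 | h1 <;> rcases hz2 with h2 | h2
      · exact hyx0 (h2.symm.trans h1)
      · subst h1; exact hyNx0 h2.symm
      · rw [h2] at h1
        have : y ∈ ({p, q} : Finset (Fin n)) := by rw [← hNx0, mem_neighborFinset]; exact h1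
        simp only [mem_insert, mem_singleton] at this
        apply hyB; rw [hB]
        rcases this with h' | h' <;> rw [h']
        · exact Finset.mem_insert_of_mem (Finset.mem_insert_self _ _)
        · exact Finset.mem_insert_of_mem (Finset.mem_insert_of_mem (Finset.mem_insert_self _ _))
      · -- z ∈ N x0 = {p,q} and z ∈ N y
        have hz : z ∈ ({p, q} : Finset (Fin n)) := by rw [← hNx0, mem_neighborFinset]; exact h1
        simp only [mem_insert, mem_singleton] at hz
        have hyNB : y ∈ ((Gᶜ).neighborFinset z \ {x0}) := by
          rw [Finset.mem_sdiff, mem_neighborFinset, Finset.mem_singleton]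
          exact ⟨h2.symm, hyx0⟩
        rcases hz with h' | h' <;> rw [h'] at hyNB <;> apply hyB <;> rw [hB]
        · exact Finset.mem_insert_of_mem (Finset.mem_insert_of_mem (Finset.mem_insert_of_mem
            (Finset.mem_union_left _ hyNB)))
        · exact Finset.mem_insert_of_mem (Finset.mem_insert_of_mem (Finset.mem_insert_of_mem
            (Finset.mem_union_right _ hyNB)))
    rw [UU, Finset.card_union_of_disjoint hdisj,
      Finset.card_insert_of_notMem (by simp), Finset.card_insert_of_notMem (by simp)]
    have := hd x0; have := hd y
    rw [SimpleGraph.degree] at *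
    omega
  omega

end Gside2

section Gside3
variable {G : SimpleGraph (Fin n)} [DecidableRel G.Adj]

lemma srg_of_tri (hn : 6 ≤ n) (hreg : G.IsRegularOfDegree (n - 3))
    (ht : TriCond Gᶜ) (hd : ∀ v, (Gᶜ).degree v = 2) :
    G.IsSRGWith n (n - 3) (n - 6) (n - 3) where
  card := Fintype.card_fin n
  regular := hreg
  of_adj := by
    intro v w hvw
    rw [card_common_eq]
    have hU : (insert v ((Gᶜ).neighborFinset v) ∪ insert w ((Gᶜ).neighborFinset w)).card = 6 := by
      have hdisj : Disjoint (CN (Gᶜ) v) (CN (Gᶜ) w) := by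
        rw [Finset.disjoint_left]
        intro x hx1 hx2
        have h1 := CN_eq_of_mem hd ht hx1
        have h2 := CN_eq_of_mem hd ht hx2
        have : w ∈ CN (Gᶜ) v := by rw [← h1, h2]; exact mem_CN_self w
        rw [CN, mem_insert, mem_neighborFinset] at this
        rcases this with h | h
        · exact hvw.ne h.symm
        · exact ((compl_adj G v w).mp h).2 hvw
      have := Finset.card_union_of_disjoint hdisj
      rw [CN, CN] at this
      rw [this]
      have c1 := card_CN hd v
      have c2 := card_CN hd w
      rw [CN] at c1 c2
      rw [c1, c2]
    rw [hU]
  of_not_adj := by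
    intro v w hne hnadj
    rw [card_common_eq]
    have hvw : (Gᶜ).Adj v w := (compl_adj G v w).mpr ⟨hne, hnadj⟩
    have hwCN : w ∈ CN (Gᶜ) v := by
      rw [CN, mem_insert, mem_neighborFinset]; exact Or.inr hvw
    have h1 := CN_eq_of_mem hd ht hwCN
    have hU : (insert v ((Gᶜ).neighborFinset v) ∪ insert w ((Gᶜ).neighborFinset w)).card = 3 := by
      have : insert w ((Gᶜ).neighborFinset w) = insert v ((Gᶜ).neighborFinset v) := h1
      rw [this, Finset.union_self]
      exact card_CN hd v
    rw [hU]

end Gside3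

lemma CN_mem_trans (hd : ∀ v, H.degree v = 2) (ht : TriCond H) {v w : Fin n}
    (hw : w ∈ CN H v) {u : Fin n} : w ∈ CN H u ↔ v ∈ CN H u := by
  have hwv : CN H w = CN H v := CN_eq_of_mem hd ht hw
  constructor
  · intro h
    have := CN_eq_of_mem hd ht h
    rw [hwv] at this
    rw [← this]; exact mem_CN_self v
  · intro h
    have := CN_eq_of_mem hd ht h
    rw [← this, ← hwv]; exact mem_CN_self w

section Eigen
variable {G : SimpleGraph (Fin n)} [DecidableRel G.Adj]

lemma sum_nbhd_split (X : Fin n → ℝ) (v : Fin n) :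
    ∑ w ∈ G.neighborFinset v, X w
      = (∑ i, X i) - X v - ∑ w ∈ (Gᶜ).neighborFinset v, X w := by
  rw [nbhdG_eq (G := G) v]
  have h1 := Finset.sum_compl_add_sum (insert v ((Gᶜ).neighborFinset v)) X
  have h2 : ∑ w ∈ insert v ((Gᶜ).neighborFinset v), X w
      = X v + ∑ w ∈ (Gᶜ).neighborFinset v, X w := Finset.sum_insert (by simp)
  linarith

lemma lap_apply' (hn : 6 ≤ n) (hreg : G.IsRegularOfDegree (n - 3)) (X : Fin n → ℝ) (v : Fin n) :
    (G.lapMatrix ℝ *ᵥ X) v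
      = ((n : ℝ) - 2) * X v + (∑ w ∈ (Gᶜ).neighborFinset v, X w) - (∑ i, X i) := by
  rw [SimpleGraph.lapMatrix_mulVec_apply, hreg v, sum_nbhd_split]
  have h3 : ((n - 3 : ℕ) : ℝ) = (n : ℝ) - 3 := by
    rw [Nat.cast_sub (by omega)]; norm_num
  rw [h3]; ring

lemma quad_id (hn : 6 ≤ n) (hreg : G.IsRegularOfDegree (n - 3)) (X : Fin n → ℝ) (l : ℝ)
    (hX : (G.lapMatrix ℝ) *ᵥ X = l • X) :
    l * (∑ i, X i ^ 2) = ((n : ℝ) - 2) * (∑ i, X i ^ 2)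
      + (∑ v, X v * ∑ w ∈ (Gᶜ).neighborFinset v, X w) - (∑ i, X i) ^ 2 := by
  have e0 : ∀ v : Fin n, l * X v
      = ((n : ℝ) - 2) * X v + (∑ w ∈ (Gᶜ).neighborFinset v, X w) - (∑ i, X i) := by
    intro v
    rw [← lap_apply' hn hreg X v, hX]
    simp
  have e1 : ∀ v : Fin n, l * X v ^ 2
      = ((n : ℝ) - 2) * X v ^ 2 + (X v * ∑ w ∈ (Gᶜ).neighborFinset v, X w)
        - X v * (∑ i, X i) := by
    intro v
    have h := e0 v
    calc l * X v ^ 2 = (l * X v) * X v := by ring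
      _ = _ := by rw [h]; ring
  rw [Finset.mul_sum, Finset.sum_congr rfl fun v _ => e1 v, Finset.sum_sub_distrib,
    Finset.sum_add_distrib, ← Finset.mul_sum, ← Finset.sum_mul]
  ring

lemma Q_le_two (hn : 6 ≤ n) (hreg : G.IsRegularOfDegree (n - 3)) (X : Fin n → ℝ) :
    (∑ v, X v * ∑ w ∈ (Gᶜ).neighborFinset v, X w) ≤ 2 * ∑ i, X i ^ 2 := by
  have hd : ∀ v, (Gᶜ).degree v = 2 := compl_deg_two hn hreg
  have hpsd := (SimpleGraph.posSemidef_lapMatrix ℝ (Gᶜ)).dotProduct_mulVec_nonneg X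
  rw [star_trivial] at hpsd
  have e1 : ∀ v : Fin n, X v * ((Gᶜ.lapMatrix ℝ) *ᵥ X) v
      = 2 * X v ^ 2 - X v * ∑ w ∈ (Gᶜ).neighborFinset v, X w := by
    intro v
    rw [SimpleGraph.lapMatrix_mulVec_apply, hd v]
    push_cast
    ring
  rw [dotProduct, Finset.sum_congr rfl fun v _ => e1 v, Finset.sum_sub_distrib,
    ← Finset.mul_sum] at hpsd
  linarith

lemma Q_ge (hn : 6 ≤ n) (hreg : G.IsRegularOfDegree (n - 3)) (ht : TriCond Gᶜ) (X : Fin n → ℝ) :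
    -(∑ i, X i ^ 2) ≤ ∑ v, X v * ∑ w ∈ (Gᶜ).neighborFinset v, X w := by
  have hd : ∀ v, (Gᶜ).degree v = 2 := compl_deg_two hn hreg
  set S : Fin n → ℝ := fun v => ∑ u ∈ CN (Gᶜ) v, X u with hS
  have hSv : ∀ v, S v = X v + ∑ w ∈ (Gᶜ).neighborFinset v, X w := by
    intro v
    simp only [hS, CN]
    rw [Finset.sum_insert (by simp)]
  have hconst : ∀ v w, w ∈ (Gᶜ).neighborFinset v → S w = S v := by
    intro v w hw
    have h1 : CN (Gᶜ) w = CN (Gᶜ) v :=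
      CN_eq_of_mem hd ht (by rw [CN, mem_insert]; exact Or.inr hw)
    simp only [hS]
    rw [h1]
  have key : ∑ v, S v ^ 2 = 3 * ∑ v, X v * S v := by
    have e1 : ∀ v, S v ^ 2 = S v * X v + ∑ w ∈ (Gᶜ).neighborFinset v, S v * X w := by
      intro v
      calc S v ^ 2 = S v * S v := sq (S v) ▸ rfl
        _ = S v * (X v + ∑ w ∈ (Gᶜ).neighborFinset v, X w) := by rw [← hSv v]
        _ = _ := by rw [mul_add, Finset.mul_sum]
    have e2 : ∑ v, ∑ w ∈ (Gᶜ).neighborFinset v, S v * X w = ∑ w, 2 * (X w * S w) := by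
      have e3 : ∀ v : Fin n, ∑ w ∈ (Gᶜ).neighborFinset v, S v * X w
          = ∑ w, if (Gᶜ).Adj v w then S v * X w else 0 := by
        intro v
        rw [SimpleGraph.neighborFinset_eq_filter, Finset.sum_filter]
      rw [Finset.sum_congr rfl fun v _ => e3 v, Finset.sum_comm]
      apply Finset.sum_congr rfl
      intro w _
      have e4 : ∑ v, (if (Gᶜ).Adj v w then S v * X w else 0)
          = ∑ v ∈ (Gᶜ).neighborFinset w, S v * X w := by
        rw [SimpleGraph.neighborFinset_eq_filter, Finset.sum_filter]
        apply Finset.sum_congr rfl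
        intro v _
        exact if_congr (SimpleGraph.adj_comm Gᶜ v w) rfl rfl
      have h2 : ((Gᶜ).neighborFinset w).card = 2 := hd w
      calc (∑ v, if (Gᶜ).Adj v w then S v * X w else 0)
          = ∑ v ∈ (Gᶜ).neighborFinset w, S v * X w := e4
        _ = ∑ v ∈ (Gᶜ).neighborFinset w, S w * X w :=
            Finset.sum_congr rfl fun v hv => by rw [hconst w v hv]
        _ = 2 * (X w * S w) := by
            rw [Finset.sum_const, h2, nsmul_eq_mul]
            push_cast
            ring
    rw [Finset.sum_congr rfl fun v _ => e1 v, Finset.sum_add_distrib, e2, Finset.mul_sum,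
      ← Finset.sum_add_distrib]
    apply Finset.sum_congr rfl
    intro v _
    ring
  have hXS : ∑ v, X v * S v
      = (∑ i, X i ^ 2) + ∑ v, X v * ∑ w ∈ (Gᶜ).neighborFinset v, X w := by
    rw [← Finset.sum_add_distrib]
    apply Finset.sum_congr rfl
    intro v _
    rw [hSv v]
    ring
  have hSq : (0:ℝ) ≤ ∑ v, S v ^ 2 := Finset.sum_nonneg fun v _ => sq_nonneg _
  linarith

end Eigen

section Eigen2
variable {G : SimpleGraph (Fin n)} [DecidableRel G.Adj]

lemma eigen_n (hn : 6 ≤ n) (hreg : G.IsRegularOfDegree (n - 3)) (ht : TriCond Gᶜ) :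
    ∃ X : Fin n → ℝ, X ≠ 0 ∧ (G.lapMatrix ℝ) *ᵥ X = (n : ℝ) • X := by
  have hd : ∀ v, (Gᶜ).degree v = 2 := compl_deg_two hn hreg
  have hx0 : (0 : ℕ) < n := by omega
  set x0 : Fin n := ⟨0, hx0⟩ with hx0def
  set C : Finset (Fin n) := CN (Gᶜ) x0 with hC
  set X : Fin n → ℝ := fun v => if v ∈ C then (n : ℝ) - 3 else -3 with hXdef
  have hXconst : ∀ v, ∀ w ∈ (Gᶜ).neighborFinset v, X w = X v := by
    intro v w hw
    have hwCN : w ∈ CN (Gᶜ) v := by rw [CN, mem_insert]; exact Or.inr hw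
    have := CN_mem_trans hd ht hwCN (u := x0)
    simp only [hXdef, hC]
    by_cases h : v ∈ CN (Gᶜ) x0
    · rw [if_pos (this.mpr h), if_pos h]
    · rw [if_neg (fun hc => h (this.mp hc)), if_neg h]
  have hcard : C.card = 3 := card_CN hd x0
  have hT : (∑ i, X i) = 0 := by
    simp only [hXdef]
    rw [Finset.sum_ite, Finset.sum_const, Finset.sum_const]
    have h1 : (Finset.univ.filter (· ∈ C)).card = 3 := by
      rw [Finset.filter_mem_eq_inter, Finset.univ_inter, hcard]
    have h2 : (Finset.univ.filter (· ∉ C)).card = n - 3 := by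
      have : Finset.univ.filter (· ∉ C) = Cᶜ := by
        ext x; simp [Finset.mem_compl]
      rw [this, Finset.card_compl, hcard, Fintype.card_fin]
    rw [h1, h2, nsmul_eq_mul, nsmul_eq_mul, Nat.cast_sub (by omega)]
    push_cast
    ring
  refine ⟨X, ?_, ?_⟩
  · intro h
    have := congrFun h x0
    simp only [hXdef, Pi.zero_apply] at this
    rw [if_pos (by rw [hC]; exact mem_CN_self x0)] at this
    have : (n : ℝ) = 3 := by linarith
    have : n = 3 := by exact_mod_cast this
    omega
  · funext v
    rw [lap_apply' hn hreg X v, hT]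
    have hsum : ∑ w ∈ (Gᶜ).neighborFinset v, X w = 2 * X v := by
      have h2 := hd v
      rw [SimpleGraph.degree] at h2
      rw [Finset.sum_congr rfl (fun w hw => hXconst v w hw), Finset.sum_const, h2, nsmul_eq_mul]
      push_cast; ring
    rw [hsum]
    simp only [Pi.smul_apply, smul_eq_mul]
    ring

lemma eigen_nm3 (hn : 6 ≤ n) (hreg : G.IsRegularOfDegree (n - 3)) (ht : TriCond Gᶜ) :
    ∃ X : Fin n → ℝ, X ≠ 0 ∧ (∑ i, X i) = 0 ∧
      (G.lapMatrix ℝ) *ᵥ X = ((n : ℝ) - 3) • X := by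
  have hd : ∀ v, (Gᶜ).degree v = 2 := compl_deg_two hn hreg
  have hx0 : (0 : ℕ) < n := by omega
  set x0 : Fin n := ⟨0, hx0⟩ with hx0def
  obtain ⟨a, b, hab, hN⟩ := nbr_pair hd x0
  obtain ⟨h0a, h0b, hadjab, hNa, hNb⟩ := tri_nbhd hd ht hN
  set X : Fin n → ℝ := fun v => if v = a then 1 else if v = b then -1 else 0 with hXdef
  have hXa : X a = 1 := by simp [hXdef]
  have hXb : X b = -1 := by simp [hXdef, hab.symm]
  have hX0 : X x0 = 0 := by simp [hXdef, h0a.ne, h0b.ne]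
  have hT : (∑ i, X i) = 0 := by
    have hsplit : X = (fun v => if v = a then (1:ℝ) else 0)
        + (fun v => if v = b then (-1:ℝ) else 0) := by
      funext v
      simp only [hXdef, Pi.add_apply]
      by_cases h1 : v = a
      · subst h1; simp [hab]
      · by_cases h2 : v = b
        · subst h2; simp [h1]
        · simp [h1, h2]
    rw [hsplit]
    simp only [Pi.add_apply]
    rw [Finset.sum_add_distrib]
    rw [Finset.sum_ite_eq' Finset.univ a (fun _ => (1:ℝ)),
      Finset.sum_ite_eq' Finset.univ b (fun _ => (-1:ℝ))]
    simp
  have houtside : ∀ v, v ∉ CN (Gᶜ) x0 → ∀ w ∈ (Gᶜ).neighborFinset v, X w = 0 := by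
    intro v hv w hw
    have hwCN : w ∈ CN (Gᶜ) v := by rw [CN, mem_insert]; exact Or.inr hw
    have htrans := CN_mem_trans hd ht hwCN (u := x0)
    have hwC : w ∉ CN (Gᶜ) x0 := fun hc => hv (htrans.mp hc)
    have hwa : w ≠ a := by
      intro h; subst h
      exact hwC (by rw [CN, hN]; simp)
    have hwb : w ≠ b := by
      intro h; subst h
      exact hwC (by rw [CN, hN]; simp)
    simp [hXdef, hwa, hwb]
  refine ⟨X, ?_, hT, ?_⟩
  · intro h
    have := congrFun h a
    rw [hXa] at this
    simp at this
  · funext v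
    rw [lap_apply' hn hreg X v, hT]
    simp only [Pi.smul_apply, smul_eq_mul]
    have hkey : ∑ w ∈ (Gᶜ).neighborFinset v, X w = - X v := by
      by_cases hva : v = a
      · subst hva
        rw [hNa, Finset.sum_pair (h0b.ne), hX0, hXb, hXa]; ring
      by_cases hvb : v = b
      · subst hvb
        rw [hNb, Finset.sum_pair (h0a.ne), hX0, hXa, hXb]; ring
      by_cases hv0 : v = x0
      · subst hv0
        rw [hN, Finset.sum_pair hab, hXa, hXb, hX0]; ring
      · have hvC : v ∉ CN (Gᶜ) x0 := by
          rw [CN, hN]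
          simp only [mem_insert, mem_singleton]
          push_neg
          exact ⟨hv0, hva, hvb⟩
        rw [Finset.sum_congr rfl (houtside v hvC), Finset.sum_const]
        simp [hXdef, hva, hvb]
    rw [hkey]
    have hXv : X v = X v := rfl
    ring

end Eigen2

/-- **Proposition.** For `n ≥ 6` and a simple connected `(n−3)`-regular graph `G`
on `n` vertices: `G` is strongly regular iff every connected component of `Gᶜ` has
exactly 3 vertices; and in that case `ℓ₁(G) = n` (the greatest Laplacian eigenvalue)
and `ℓ_{n−1}(G) = n − 3` (the least nontrivial Laplacian eigenvalue). -/
theorem srg_of_nMinusThree_regular (n : ℕ) (hn : 6 ≤ n)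
    (G : SimpleGraph (Fin n)) [DecidableRel G.Adj]
    (hconn : G.Connected)
    (hreg : G.IsRegularOfDegree (n - 3)) :
    ((∃ k lam mu : ℕ, G.IsSRGWith n k lam mu) ↔
      (∀ v : Fin n, ((Gᶜ).connectedComponentMk v).supp.ncard = 3)) ∧
    ((∀ v : Fin n, ((Gᶜ).connectedComponentMk v).supp.ncard = 3) →
      IsGreatest {l : ℝ | ∃ X : Fin n → ℝ, X ≠ 0 ∧
        (G.lapMatrix ℝ).mulVec X = l • X} (n : ℝ) ∧
      IsLeast {l : ℝ | ∃ X : Fin n → ℝ, X ≠ 0 ∧ (∑ i, X i) = 0 ∧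
        (G.lapMatrix ℝ).mulVec X = l • X} ((n : ℝ) - 3)) := by

  have hd : ∀ v, (Gᶜ).degree v = 2 := compl_deg_two hn hreg
  constructor
  · constructor
    · rintro ⟨k, lam, mu, hsrg⟩
      exact ncard_supp_of_tri hd (tri_of_srg hn hreg hsrg)
    · intro hs
      exact ⟨n - 3, n - 6, n - 3, srg_of_tri hn hreg (tri_of_ncard_supp hd hs) hd⟩
  · intro hs
    have ht : TriCond Gᶜ := tri_of_ncard_supp hd hs
    constructor
    · constructor
      · obtain ⟨X, hX0, hXeq⟩ := eigen_n hn hreg ht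
        exact ⟨X, hX0, hXeq⟩
      · rintro l ⟨X, hX0, hXeq⟩
        have hs2 : 0 < ∑ i, X i ^ 2 := by
          obtain ⟨i, hi⟩ := Function.ne_iff.mp hX0
          exact Finset.sum_pos' (fun j _ => sq_nonneg _)
            ⟨i, Finset.mem_univ i, lt_of_le_of_ne (sq_nonneg _) (Ne.symm (pow_ne_zero 2 hi))⟩
        have hq := quad_id hn hreg X l hXeq
        have hQ := Q_le_two hn hreg X
        have hT2 : (0:ℝ) ≤ (∑ i, X i) ^ 2 := sq_nonneg _
        nlinarith [hs2, hq, hQ, hT2]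
    · constructor
      · obtain ⟨X, hX0, hT, hXeq⟩ := eigen_nm3 hn hreg ht
        exact ⟨X, hX0, hT, hXeq⟩
      · rintro l ⟨X, hX0, hT, hXeq⟩
        have hs2 : 0 < ∑ i, X i ^ 2 := by
          obtain ⟨i, hi⟩ := Function.ne_iff.mp hX0
          exact Finset.sum_pos' (fun j _ => sq_nonneg _)
            ⟨i, Finset.mem_univ i, lt_of_le_of_ne (sq_nonneg _) (Ne.symm (pow_ne_zero 2 hi))⟩
        have hq := quad_id hn hreg X l hXeq
        have hQ := Q_ge hn hreg ht X
        rw [hT] at hq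
        nlinarith [hs2, hq, hQ]
end

section
/- Let G be a simple graph on vertex set V = {1,...,n} with adjacency matrix A = A(G), degrees d_i, and for distinct vertices j, k let w_{jk} = |G_1(j) ∩ G_1(k)| be the number of common neighbors of j and k. Then for every real vector X = (x_1,...,x_n)^T: X^T A² X = Σ_{i ∈ V} ( Σ_{j ∈ G_1(i)} d_j ) x_i² − Σ_{j < k, jk ∈ E} w_{jk} (x_j − x_k)² − Σ_{j < k, jk ∉ E} w_{jk} (x_j − x_k)². -/
open Finset

lemma sym_quad {n : ℕ} (B : Matrix (Fin n) (Fin n) ℝ) (hB : ∀ i j, B i j = B j i)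
    (X : Fin n → ℝ) :
    ∑ i, ∑ j, X i * B i j * X j
      = (∑ i, (∑ j, B i j) * X i ^ 2)
        - ∑ p ∈ Finset.univ.filter (fun p : Fin n × Fin n => p.1 < p.2),
            B p.1 p.2 * (X p.1 - X p.2) ^ 2 := by
  have hL : ∑ i, ∑ j, X i * B i j * X j
      = ∑ p ∈ (univ : Finset (Fin n × Fin n)), X p.1 * B p.1 p.2 * X p.2 := by
    rw [← Finset.sum_product']; rfl
  have hR : (∑ i, (∑ j, B i j) * X i ^ 2)
      = ∑ p ∈ (univ : Finset (Fin n × Fin n)), B p.1 p.2 * X p.1 ^ 2 := by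
    simp_rw [Finset.sum_mul]
    rw [← Finset.sum_product']; rfl
  rw [hL, hR, eq_sub_iff_add_eq, ← eq_sub_iff_add_eq', ← Finset.sum_sub_distrib]
  have hsplit := Finset.sum_filter_add_sum_filter_not (univ : Finset (Fin n × Fin n))
    (fun p => p.1 < p.2) (fun p => B p.1 p.2 * X p.1 ^ 2 - X p.1 * B p.1 p.2 * X p.2)
  rw [← hsplit]
  have hsplit2 := Finset.sum_filter_add_sum_filter_not
    (univ.filter (fun p : Fin n × Fin n => ¬ p.1 < p.2))
    (fun p => p.1 = p.2) (fun p => B p.1 p.2 * X p.1 ^ 2 - X p.1 * B p.1 p.2 * X p.2)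
  rw [← hsplit2]
  have hdiag : ∑ p ∈ (univ.filter (fun p : Fin n × Fin n => ¬ p.1 < p.2)).filter
      (fun p => p.1 = p.2), (B p.1 p.2 * X p.1 ^ 2 - X p.1 * B p.1 p.2 * X p.2) = 0 := by
    apply Finset.sum_eq_zero
    intro p hp
    simp only [Finset.mem_filter] at hp
    rw [← hp.2]
    ring
  rw [hdiag, zero_add]
  have hgt : ∑ p ∈ (univ.filter (fun p : Fin n × Fin n => ¬ p.1 < p.2)).filter
      (fun p => ¬ p.1 = p.2), (B p.1 p.2 * X p.1 ^ 2 - X p.1 * B p.1 p.2 * X p.2)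
      = ∑ p ∈ univ.filter (fun p : Fin n × Fin n => p.1 < p.2),
          (B p.1 p.2 * X p.2 ^ 2 - X p.1 * B p.1 p.2 * X p.2) := by
    apply Finset.sum_nbij' (fun p => Prod.swap p) (fun p => Prod.swap p)
    · intro p hp
      simp only [Finset.mem_filter, Finset.mem_univ, true_and] at hp ⊢
      exact lt_of_le_of_ne (not_lt.mp hp.1) (fun h => hp.2 h.symm)
    · intro p hp
      simp only [Finset.mem_filter, Finset.mem_univ, true_and, Prod.fst_swap,
        Prod.snd_swap] at hp ⊢
      exact ⟨not_lt.mpr hp.le, hp.ne'⟩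
    · intro p _; simp
    · intro p _; simp
    · intro p hp
      simp only [Prod.fst_swap, Prod.snd_swap]
      rw [hB p.2 p.1]
      ring
  rw [hgt, ← Finset.sum_add_distrib]
  apply Finset.sum_congr rfl
  intro p _
  ring

/-- **Lemma (quadratic form of `A²`).** For a simple graph `G` on `{1,...,n}` with
adjacency matrix `A`, common-neighbor counts `w_{jk}` and any real vector `X`:
`Xᵀ A² X = ∑_i (∑_{j∈N(i)} d_j) x_i² − ∑_{j<k, jk∈E} w_{jk}(x_j − x_k)²
  − ∑_{j<k, jk∉E} w_{jk}(x_j − x_k)²`. -/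
theorem adj_sq_quadratic_form (n : ℕ) (G : SimpleGraph (Fin n)) [DecidableRel G.Adj]
    (X : Fin n → ℝ) :
    dotProduct X ((G.adjMatrix ℝ * G.adjMatrix ℝ).mulVec X) =
      (∑ i, (∑ j ∈ G.neighborFinset i, (G.degree j : ℝ)) * X i ^ 2)
      - (∑ p ∈ Finset.univ.filter
            (fun p : Fin n × Fin n => p.1 < p.2 ∧ G.Adj p.1 p.2),
          ((G.neighborFinset p.1 ∩ G.neighborFinset p.2).card : ℝ)
            * (X p.1 - X p.2) ^ 2)
      - (∑ p ∈ Finset.univ.filter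
            (fun p : Fin n × Fin n => p.1 < p.2 ∧ ¬ G.Adj p.1 p.2),
          ((G.neighborFinset p.1 ∩ G.neighborFinset p.2).card : ℝ)
            * (X p.1 - X p.2) ^ 2) := by
  classical
  set B := G.adjMatrix ℝ * G.adjMatrix ℝ with hBdef
  have hB : ∀ i j, B i j = ((G.neighborFinset i ∩ G.neighborFinset j).card : ℝ) := by
    intro i j
    rw [hBdef, SimpleGraph.adjMatrix_mul_apply]
    have : ∑ u ∈ G.neighborFinset i, G.adjMatrix ℝ u j
        = ∑ u ∈ G.neighborFinset i, (if G.Adj u j then (1 : ℝ) else 0) := by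
      simp [SimpleGraph.adjMatrix_apply]
    rw [this, Finset.sum_boole]
    congr 1
    apply congrArg
    ext u
    simp [SimpleGraph.mem_neighborFinset, SimpleGraph.adj_comm]
  have hsym : ∀ i j, B i j = B j i := by
    intro i j; rw [hB, hB, Finset.inter_comm]
  have hrow : ∀ i, ∑ j, B i j = ∑ j ∈ G.neighborFinset i, (G.degree j : ℝ) := by
    intro i
    have h1 : ∑ j, B i j = ∑ j, ∑ u ∈ G.neighborFinset i, G.adjMatrix ℝ u j := by
      apply Finset.sum_congr rfl
      intro j _
      rw [hBdef, SimpleGraph.adjMatrix_mul_apply]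
    rw [h1, Finset.sum_comm]
    apply Finset.sum_congr rfl
    intro u _
    have : ∑ j, G.adjMatrix ℝ u j = ∑ j, (if G.Adj u j then (1 : ℝ) else 0) := by
      simp [SimpleGraph.adjMatrix_apply]
    rw [this, Finset.sum_boole]
    congr 1
    rw [SimpleGraph.degree, SimpleGraph.neighborFinset_eq_filter]
  have hL : dotProduct X (B.mulVec X) = ∑ i, ∑ j, X i * B i j * X j := by
    simp only [dotProduct, Matrix.mulVec, Finset.mul_sum]
    apply Finset.sum_congr rfl; intro i _
    apply Finset.sum_congr rfl; intro j _
    ring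
  rw [hL, sym_quad B hsym X]
  have hrows : ∑ i, (∑ j, B i j) * X i ^ 2
      = ∑ i, (∑ j ∈ G.neighborFinset i, (G.degree j : ℝ)) * X i ^ 2 := by
    apply Finset.sum_congr rfl
    intro i _
    rw [hrow]
  have hcomb : ∑ p ∈ Finset.univ.filter (fun p : Fin n × Fin n => p.1 < p.2),
        B p.1 p.2 * (X p.1 - X p.2) ^ 2
        = (∑ p ∈ Finset.univ.filter
              (fun p : Fin n × Fin n => p.1 < p.2 ∧ G.Adj p.1 p.2),
            ((G.neighborFinset p.1 ∩ G.neighborFinset p.2).card : ℝ)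
              * (X p.1 - X p.2) ^ 2)
          + (∑ p ∈ Finset.univ.filter
              (fun p : Fin n × Fin n => p.1 < p.2 ∧ ¬ G.Adj p.1 p.2),
            ((G.neighborFinset p.1 ∩ G.neighborFinset p.2).card : ℝ)
              * (X p.1 - X p.2) ^ 2) := by
      have e1 : Finset.univ.filter (fun p : Fin n × Fin n => p.1 < p.2 ∧ G.Adj p.1 p.2)
          = (Finset.univ.filter (fun p : Fin n × Fin n => p.1 < p.2)).filter
              (fun p => G.Adj p.1 p.2) := by
        rw [Finset.filter_filter]
      have e2 : Finset.univ.filter (fun p : Fin n × Fin n => p.1 < p.2 ∧ ¬ G.Adj p.1 p.2)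
          = (Finset.univ.filter (fun p : Fin n × Fin n => p.1 < p.2)).filter
              (fun p => ¬ G.Adj p.1 p.2) := by
        rw [Finset.filter_filter]
      rw [e1, e2, Finset.sum_filter_add_sum_filter_not]
      apply Finset.sum_congr rfl
      intro p _
      rw [hB]
  rw [hrows, hcomb, sub_sub]
end

section
/- Let G be a simple graph on vertex set V = {1,...,n}, let ℓ be a real number and X = (x_1,...,x_n)^T a real vector with L(G) X = ℓ X, and let λ and μ be real numbers such that every pair of adjacent vertices of G has at least λ common neighbors and every pair of distinct nonadjacent vertices of G has at least μ common neighbors (with λ ≥ 0 and μ ≥ 0). Then Σ_{i ∈ V} (d_i − ℓ)² x_i² ≤ Σ_{i ∈ V} ( Σ_{j ∈ G_1(i)} d_j ) x_i² − λ Σ_{j < k, jk ∈ E} (x_j − x_k)² − μ Σ_{j < k, jk ∉ E} (x_j − x_k)². -/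
open Finset

lemma half_sum_sym {n : ℕ} (g : Fin n → Fin n → ℝ) (hsym : ∀ j k, g j k = g k j)
    (hdiag : ∀ j, g j j = 0) :
    ∑ j, ∑ k, g j k =
      2 * ∑ p ∈ Finset.univ.filter (fun p : Fin n × Fin n => p.1 < p.2), g p.1 p.2 := by
  rw [← Finset.sum_product', Finset.univ_product_univ]
  rw [← Finset.sum_filter_add_sum_filter_not Finset.univ (fun p : Fin n × Fin n => p.1 < p.2)]
  have h2 : ∑ p ∈ Finset.univ.filter (fun p : Fin n × Fin n => ¬ p.1 < p.2), g p.1 p.2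
      = ∑ p ∈ Finset.univ.filter (fun p : Fin n × Fin n => p.1 < p.2), g p.1 p.2 := by
    rw [← Finset.sum_filter_add_sum_filter_not
      (Finset.univ.filter (fun p : Fin n × Fin n => ¬ p.1 < p.2))
      (fun p : Fin n × Fin n => p.2 < p.1), Finset.filter_filter, Finset.filter_filter]
    have hz : ∑ p ∈ Finset.univ.filter
        (fun p : Fin n × Fin n => ¬ p.1 < p.2 ∧ ¬ p.2 < p.1), g p.1 p.2 = 0 := by
      apply Finset.sum_eq_zero
      intro p hp
      simp only [Finset.mem_filter] at hp
      have : p.1 = p.2 := le_antisymm (not_lt.1 hp.2.2) (not_lt.1 hp.2.1)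
      rw [this, hdiag]
    rw [hz, add_zero]
    apply Finset.sum_nbij' (fun p => Prod.swap p) (fun p => Prod.swap p)
    · intro p hp; simp only [Finset.mem_filter] at *
      exact ⟨Finset.mem_univ _, hp.2.2⟩
    · intro p hp; simp only [Finset.mem_filter] at *
      exact ⟨Finset.mem_univ _, not_lt.2 hp.2.le, hp.2⟩
    · intro p _; simp
    · intro p _; simp
    · intro p _; exact hsym p.1 p.2
  rw [h2]; ring


/-- **Lemma.** For a simple graph `G` on `{1,...,n}`, a real `ℓ` and a vector `X`
with `L(G) X = ℓ X`, and reals `0 ≤ λ ≤ λ(G)`, `0 ≤ μ ≤ μ(G)`: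
`∑_i (d_i − ℓ)² x_i² ≤ ∑_i (∑_{j∈N(i)} d_j) x_i²
  − λ ∑_{j<k, jk∈E} (x_j − x_k)² − μ ∑_{j<k, jk∉E} (x_j − x_k)²`. -/
theorem eigen_quadratic_inequality (n : ℕ) (G : SimpleGraph (Fin n))
    [DecidableRel G.Adj]
    (ℓ : ℝ) (X : Fin n → ℝ)
    (heig : (G.lapMatrix ℝ).mulVec X = ℓ • X)
    (lam mu : ℝ) (hlam0 : 0 ≤ lam) (hmu0 : 0 ≤ mu)
    (hlam : ∀ i j : Fin n, G.Adj i j →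
      lam ≤ ((G.neighborFinset i ∩ G.neighborFinset j).card : ℝ))
    (hmu : ∀ i j : Fin n, i ≠ j → ¬ G.Adj i j →
      mu ≤ ((G.neighborFinset i ∩ G.neighborFinset j).card : ℝ)) :
    ∑ i, ((G.degree i : ℝ) - ℓ) ^ 2 * X i ^ 2 ≤
      (∑ i, (∑ j ∈ G.neighborFinset i, (G.degree j : ℝ)) * X i ^ 2)
      - lam * (∑ p ∈ Finset.univ.filter
            (fun p : Fin n × Fin n => p.1 < p.2 ∧ G.Adj p.1 p.2),
          (X p.1 - X p.2) ^ 2)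
      - mu * (∑ p ∈ Finset.univ.filter
            (fun p : Fin n × Fin n => p.1 < p.2 ∧ ¬ G.Adj p.1 p.2),
          (X p.1 - X p.2) ^ 2) := by
  classical
  -- eigenvalue equation per coordinate
  have key : ∀ i, ((G.degree i : ℝ) - ℓ) * X i = ∑ j ∈ G.neighborFinset i, X j := by
    intro i
    have h := congrFun heig i
    rw [SimpleGraph.lapMatrix_mulVec_apply] at h
    simp only [Pi.smul_apply, smul_eq_mul] at h
    linarith
  set a : Fin n → Fin n → ℝ := fun i j => if G.Adj i j then 1 else 0 with ha
  set c : Fin n → Fin n → ℝ :=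
    fun j k => ((G.neighborFinset j ∩ G.neighborFinset k).card : ℝ) with hc
  have hcsym : ∀ j k, c j k = c k j := by
    intro j k; simp [hc, Finset.inter_comm]
  have hNsum : ∀ i, ∑ j ∈ G.neighborFinset i, X j = ∑ j, a i j * X j := by
    intro i
    simp [SimpleGraph.neighborFinset_eq_filter, Finset.sum_filter, ha, ite_mul]
  have hcind : ∀ j k, c j k = ∑ i, a i j * a i k := by
    intro j k
    have hset : G.neighborFinset j ∩ G.neighborFinset k
        = Finset.univ.filter (fun i => G.Adj i j ∧ G.Adj i k) := by
      ext i; simp [SimpleGraph.adj_comm, and_comm]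
    simp only [hc]
    rw [hset, Finset.card_filter]
    push_cast
    apply Finset.sum_congr rfl
    intro i _
    by_cases h1 : G.Adj i j <;> by_cases h2 : G.Adj i k <;> simp [ha, h1, h2]
  have hdeg : ∀ i, ∑ k, a i k = (G.degree i : ℝ) := by
    intro i
    simp [ha, SimpleGraph.neighborFinset_eq_filter, Finset.sum_ite_eq,
      Finset.sum_boole, SimpleGraph.degree]
  -- step 1 : LHS as double sum with common-neighbor counts
  have step1 : ∑ i, ((G.degree i : ℝ) - ℓ) ^ 2 * X i ^ 2
      = ∑ j, ∑ k, c j k * (X j * X k) := by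
    have e1 : ∀ i, ((G.degree i : ℝ) - ℓ) ^ 2 * X i ^ 2
        = ∑ j, ∑ k, (a i j * a i k) * (X j * X k) := by
      intro i
      have : ((G.degree i : ℝ) - ℓ) ^ 2 * X i ^ 2
          = (∑ j, a i j * X j) * (∑ k, a i k * X k) := by
        rw [← hNsum, ← key]; ring
      rw [this, Finset.sum_mul_sum]
      exact Finset.sum_congr rfl fun j _ => Finset.sum_congr rfl fun k _ => by ring
    calc ∑ i, ((G.degree i : ℝ) - ℓ) ^ 2 * X i ^ 2
        = ∑ i, ∑ j, ∑ k, (a i j * a i k) * (X j * X k) := Finset.sum_congr rfl fun i _ => e1 i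
      _ = ∑ j, ∑ i, ∑ k, (a i j * a i k) * (X j * X k) := Finset.sum_comm
      _ = ∑ j, ∑ k, ∑ i, (a i j * a i k) * (X j * X k) :=
          Finset.sum_congr rfl fun j _ => Finset.sum_comm
      _ = ∑ j, ∑ k, c j k * (X j * X k) := by
          refine Finset.sum_congr rfl fun j _ => Finset.sum_congr rfl fun k _ => ?_
          rw [hcind, Finset.sum_mul]
  -- row sums of c
  have hrow : ∀ j, ∑ k, c j k = ∑ i ∈ G.neighborFinset j, (G.degree i : ℝ) := by
    intro j
    calc ∑ k, c j k = ∑ k, ∑ i, a i j * a i k :=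
          Finset.sum_congr rfl fun k _ => hcind j k
      _ = ∑ i, ∑ k, a i j * a i k := Finset.sum_comm
      _ = ∑ i, a i j * (G.degree i : ℝ) := by
          refine Finset.sum_congr rfl fun i _ => ?_
          rw [← Finset.mul_sum, hdeg]
      _ = ∑ i ∈ G.neighborFinset j, (G.degree i : ℝ) := by
          simp [ha, SimpleGraph.neighborFinset_eq_filter, Finset.sum_filter, ite_mul,
            SimpleGraph.adj_comm]
  -- symmetry identity
  have hB : ∑ j, ∑ k, c j k * X k ^ 2 = ∑ j, ∑ k, c j k * X j ^ 2 := by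
    rw [Finset.sum_comm]
    exact Finset.sum_congr rfl fun b _ => Finset.sum_congr rfl fun d _ =>
      congrArg (· * X b ^ 2) (hcsym d b)
  have key2 : (∑ j, ∑ k, c j k * (X j * X k)) * 2 + (∑ j, ∑ k, c j k * (X j - X k) ^ 2)
      = (∑ j, ∑ k, c j k * X j ^ 2) + (∑ j, ∑ k, c j k * X k ^ 2) := by
    simp_rw [Finset.sum_mul, ← Finset.sum_add_distrib]
    exact Finset.sum_congr rfl fun j _ => Finset.sum_congr rfl fun k _ => by ring
  have hA : ∑ j, ∑ k, c j k * X j ^ 2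
      = ∑ j, (∑ i ∈ G.neighborFinset j, (G.degree i : ℝ)) * X j ^ 2 := by
    refine Finset.sum_congr rfl fun j _ => ?_
    rw [← Finset.sum_mul, hrow]
  have hD : ∑ j, ∑ k, c j k * (X j - X k) ^ 2
      = 2 * ∑ p ∈ Finset.univ.filter (fun p : Fin n × Fin n => p.1 < p.2),
          c p.1 p.2 * (X p.1 - X p.2) ^ 2 := by
    apply half_sum_sym
    · intro j k; rw [hcsym]; ring_nf
    · intro j; simp
  -- lower bound the off-diagonal sum
  have hsplit : ∑ p ∈ Finset.univ.filter (fun p : Fin n × Fin n => p.1 < p.2),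
        c p.1 p.2 * (X p.1 - X p.2) ^ 2
      = (∑ p ∈ Finset.univ.filter
            (fun p : Fin n × Fin n => p.1 < p.2 ∧ G.Adj p.1 p.2),
          c p.1 p.2 * (X p.1 - X p.2) ^ 2)
        + (∑ p ∈ Finset.univ.filter
            (fun p : Fin n × Fin n => p.1 < p.2 ∧ ¬ G.Adj p.1 p.2),
          c p.1 p.2 * (X p.1 - X p.2) ^ 2) := by
    rw [← Finset.sum_filter_add_sum_filter_not
      (Finset.univ.filter (fun p : Fin n × Fin n => p.1 < p.2))
      (fun p : Fin n × Fin n => G.Adj p.1 p.2), Finset.filter_filter, Finset.filter_filter]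
  have hb1 : lam * (∑ p ∈ Finset.univ.filter
        (fun p : Fin n × Fin n => p.1 < p.2 ∧ G.Adj p.1 p.2), (X p.1 - X p.2) ^ 2)
      ≤ ∑ p ∈ Finset.univ.filter
        (fun p : Fin n × Fin n => p.1 < p.2 ∧ G.Adj p.1 p.2),
          c p.1 p.2 * (X p.1 - X p.2) ^ 2 := by
    rw [Finset.mul_sum]
    apply Finset.sum_le_sum
    intro p hp
    simp only [Finset.mem_filter] at hp
    exact mul_le_mul_of_nonneg_right (hlam _ _ hp.2.2) (sq_nonneg _)
  have hb2 : mu * (∑ p ∈ Finset.univ.filter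
        (fun p : Fin n × Fin n => p.1 < p.2 ∧ ¬ G.Adj p.1 p.2), (X p.1 - X p.2) ^ 2)
      ≤ ∑ p ∈ Finset.univ.filter
        (fun p : Fin n × Fin n => p.1 < p.2 ∧ ¬ G.Adj p.1 p.2),
          c p.1 p.2 * (X p.1 - X p.2) ^ 2 := by
    rw [Finset.mul_sum]
    apply Finset.sum_le_sum
    intro p hp
    simp only [Finset.mem_filter] at hp
    exact mul_le_mul_of_nonneg_right (hmu _ _ (ne_of_lt hp.2.1) hp.2.2) (sq_nonneg _)
  rw [step1]
  rw [hB, hA] at key2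
  rw [hD, hsplit] at key2
  linarith
end
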